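/- For every integer n ≥ 2, the function (t_1,…,t_n) ↦ 1/((1−t_1)·t_2·t_3⋯t_n) is Lebesgue integrable on the open simplex Δ_n = {(t_1,…,t_n) ∈ ℝ^n : 0 < t_1 < t_2 < ⋯ < t_n < 1}, and its integral over Δ_n equals ζ(n) = Σ_{k=1}^∞ k^{−n}. (Leibniz's formula presenting ζ(n) as a length n iterated integral ∫_{0<t_1<⋯<t_n<1} dt_1/(1−t_1) ∧ dt_2/t_2 ∧ ⋯ ∧ dt_n/t_n.) -/

import Mathlib

open MeasureTheory Set

noncomputable section

def Δ (n : ℕ) (b : ℝ) : Set (Fin (n+1) → ℝ) :=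
  {t | StrictMono t ∧ 0 < t 0 ∧ t (Fin.last n) < b}

def F (n k : ℕ) (t : Fin (n+1) → ℝ) : ℝ :=
  t 0 ^ k * (∏ i ∈ Finset.univ.erase 0, t i)⁻¹

lemma measurable_F (n k : ℕ) : Measurable (F n k) := by
  apply Measurable.mul
  · exact (measurable_pi_apply 0).pow_const k
  · exact (Finset.measurable_prod _ fun i _ => measurable_pi_apply i).inv

lemma measurableSet_strictMono (n : ℕ) :
    MeasurableSet {t : Fin n → ℝ | StrictMono t} := by
  have : {t : Fin n → ℝ | StrictMono t} =
      ⋂ p : Fin n × Fin n, ⋂ _ : p.1 < p.2, {t | t p.1 < t p.2} := by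
    ext t
    simp only [mem_iInter, mem_setOf_eq]
    exact ⟨fun h p hp => h hp, fun h i j hij => h (i, j) hij⟩
  rw [this]
  exact MeasurableSet.iInter fun p => MeasurableSet.iInter fun _ =>
    measurableSet_lt (measurable_pi_apply _) (measurable_pi_apply _)

lemma measurableSet_Δ (n : ℕ) (b : ℝ) : MeasurableSet (Δ n b) := by
  apply (measurableSet_strictMono (n+1)).inter
  exact (measurableSet_lt measurable_const (measurable_pi_apply 0)).inter
    (measurableSet_lt (measurable_pi_apply _) measurable_const)

lemma Δ_pos (n : ℕ) {b : ℝ} {t : Fin (n+1) → ℝ} (ht : t ∈ Δ n b) (i : Fin (n+1)) :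
    0 < t i := lt_of_lt_of_le ht.2.1 (ht.1.monotone (Fin.zero_le i))

lemma Δ_empty (n : ℕ) {b : ℝ} (hb : b ≤ 0) : Δ n b = ∅ := by
  ext t
  simp only [mem_empty_iff_false, iff_false]
  intro ht
  exact absurd ((Δ_pos n ht (Fin.last n)).trans ht.2.2) (by linarith)

lemma lint_pow (k : ℕ) {b : ℝ} (hb : 0 < b) :
    ∫⁻ s in Ioo (0:ℝ) b, ENNReal.ofReal (s ^ k) =
      ENNReal.ofReal (b ^ (k+1) / (k+1)) := by
  have hint : IntegrableOn (fun s : ℝ => s ^ k) (Ioo 0 b) := by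
    apply (continuous_pow k).continuousOn.integrableOn_compact isCompact_Icc |>.mono_set
    exact Ioo_subset_Icc_self
  rw [← ofReal_integral_eq_lintegral_ofReal hint]
  · congr 1
    rw [← integral_Ioc_eq_integral_Ioo, ← intervalIntegral.integral_of_le hb.le,
      integral_pow]
    simp
  · filter_upwards [ae_restrict_mem measurableSet_Ioo] with s hs
    exact pow_nonneg hs.1.le k

lemma snoc_strictMono_iff (n : ℕ) (u : Fin (n+1) → ℝ) (s : ℝ) :
    StrictMono (Fin.snoc u s : Fin (n+2) → ℝ) ↔ StrictMono u ∧ u (Fin.last n) < s := by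
  rw [Fin.strictMono_iff_lt_succ, Fin.strictMono_iff_lt_succ]
  constructor
  · intro h
    refine ⟨fun i => ?_, ?_⟩
    · have := h i.castSucc
      rwa [Fin.succ_castSucc, Fin.snoc_castSucc, Fin.snoc_castSucc] at this
    · have := h (Fin.last n)
      rwa [Fin.succ_last, Fin.snoc_last, Fin.snoc_castSucc] at this
  · rintro ⟨h1, h2⟩ i
    induction i using Fin.lastCases with
    | last => rwa [Fin.succ_last, Fin.snoc_last, Fin.snoc_castSucc]
    | cast j =>
        rw [Fin.succ_castSucc, Fin.snoc_castSucc, Fin.snoc_castSucc]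
        exact h1 j

lemma snoc_zero' (n : ℕ) (u : Fin (n+1) → ℝ) (s : ℝ) :
    (Fin.snoc u s : Fin (n+2) → ℝ) 0 = u 0 := by
  have : (0 : Fin (n+2)) = Fin.castSucc 0 := rfl
  rw [this, Fin.snoc_castSucc]

lemma piFinSuccAbove_symm_snoc (n : ℕ) (s : ℝ) (u : Fin (n+1) → ℝ) :
    (MeasurableEquiv.piFinSuccAbove (fun _ : Fin (n+2) => ℝ) (Fin.last (n+1))).symm (s, u)
      = Fin.snoc u s := by
  simp [MeasurableEquiv.piFinSuccAbove_symm_apply, Fin.insertNth_last, Fin.snocEquiv]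

lemma prod_erase_snoc (n : ℕ) (u : Fin (n+1) → ℝ) (s : ℝ) (hu : ∀ i, 0 < u i) :
    ∏ i ∈ Finset.univ.erase (0 : Fin (n+2)), (Fin.snoc u s : Fin (n+2) → ℝ) i
      = s * ∏ i ∈ Finset.univ.erase (0 : Fin (n+1)), u i := by
  have h1 : ∀ m (v : Fin (m+1) → ℝ), (0:ℝ) < v 0 →
      ∏ i ∈ Finset.univ.erase (0 : Fin (m+1)), v i = (∏ i, v i) / v 0 := by
    intro m v hv
    rw [eq_div_iff hv.ne', Finset.prod_erase_mul _ _ (Finset.mem_univ _)]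
  have hs0 : (Fin.snoc u s : Fin (n+2) → ℝ) 0 = u 0 := snoc_zero' n u s
  rw [h1 (n+1) _ (by rw [hs0]; exact hu 0), h1 n u (hu 0), hs0]
  rw [Fin.prod_univ_castSucc]
  simp only [Fin.snoc_castSucc, Fin.snoc_last]
  field_simp

lemma measurable_pow_ofReal {k : ℕ} : Measurable fun s : ℝ => ENNReal.ofReal (s ^ k) :=
  (measurable_id.pow_const k).ennreal_ofReal

lemma key (n : ℕ) : ∀ k : ℕ, ∀ b : ℝ, 0 < b →
    ∫⁻ t in Δ n b, ENNReal.ofReal (F n k t)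
      = ENNReal.ofReal (b ^ (k+1) / ((k:ℝ)+1) ^ (n+1)) := by
  induction n with
  | zero =>
      intro k b hb
      have hΔ : Δ 0 b = (⇑(MeasurableEquiv.funUnique (Fin 1) ℝ)) ⁻¹' Ioo 0 b := by
        ext t
        simp only [Δ, mem_setOf_eq, mem_preimage, MeasurableEquiv.funUnique,
          Equiv.funUnique, MeasurableEquiv.coe_mk, Equiv.coe_fn_mk, mem_Ioo]
        refine ⟨fun h => ⟨h.2.1, h.2.2⟩, fun h => ⟨?_, h.1, h.2⟩⟩
        intro i j hij
        have hi := i.isLt; have hj := j.isLt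
        have : i = j := Fin.ext (by omega)
        exact absurd (this ▸ hij) (lt_irrefl _)
      have hF : ∀ t : Fin 1 → ℝ, ENNReal.ofReal (F 0 k t)
          = (fun x : ℝ => ENNReal.ofReal (x ^ k)) ((MeasurableEquiv.funUnique (Fin 1) ℝ) t) := by
        intro t
        simp only [F, show (Finset.univ.erase (0 : Fin 1)) = ∅ from by decide,
          Finset.prod_empty, inv_one, mul_one]
        rfl
      have h := volume_preserving_funUnique (Fin 1) ℝ
      rw [hΔ]
      simp only [hF]
      erw [h.setLIntegral_comp_preimage_emb
        (MeasurableEquiv.funUnique (Fin 1) ℝ).measurableEmbedding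
        (fun x => ENNReal.ofReal (x ^ k)) (Ioo 0 b)]
      rw [lint_pow k hb]
      norm_num
  | succ n IH =>
      intro k b hb
      set e := MeasurableEquiv.piFinSuccAbove (fun _ : Fin (n+2) => ℝ) (Fin.last (n+1)) with he
      have hmp : MeasurePreserving e.symm volume volume :=
        (volume_preserving_piFinSuccAbove (fun _ : Fin (n+2) => ℝ) (Fin.last (n+1))).symm
      set T := e.symm ⁻¹' (Δ (n+1) b) with hT
      have hTmem : ∀ s u, (s, u) ∈ T ↔ (u ∈ Δ n s ∧ s < b) := by
        intro s u
        rw [hT, mem_preimage, piFinSuccAbove_symm_snoc]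
        constructor
        · rintro ⟨hsm, h0, hlast⟩
          rw [snoc_strictMono_iff] at hsm
          rw [snoc_zero'] at h0
          rw [Fin.snoc_last] at hlast
          exact ⟨⟨hsm.1, h0, hsm.2⟩, hlast⟩
        · rintro ⟨⟨hsm, h0, hlast⟩, hsb⟩
          refine ⟨(snoc_strictMono_iff n u s).mpr ⟨hsm, hlast⟩, ?_, ?_⟩
          · rw [snoc_zero']; exact h0
          · rw [Fin.snoc_last]; exact hsb
      have step1 : ∫⁻ t in Δ (n+1) b, ENNReal.ofReal (F (n+1) k t)
          = ∫⁻ p in T, ENNReal.ofReal (F (n+1) k (e.symm p)) := by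
        rw [hT]
        exact (hmp.setLIntegral_comp_preimage_emb e.symm.measurableEmbedding _ _).symm

      have hG : Measurable fun p : ℝ × (Fin (n+1) → ℝ) =>
          ENNReal.ofReal (F (n+1) k (e.symm p)) :=
        ((measurable_F (n+1) k).comp e.symm.measurable).ennreal_ofReal
      have hTmeas : MeasurableSet T := e.symm.measurable (measurableSet_Δ (n+1) b)
      have step2 : ∫⁻ p in T, ENNReal.ofReal (F (n+1) k (e.symm p))
          = ∫⁻ s : ℝ, ∫⁻ u : Fin (n+1) → ℝ,
              T.indicator (fun p => ENNReal.ofReal (F (n+1) k (e.symm p))) (s, u) := by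
        rw [← lintegral_indicator hTmeas, Measure.volume_eq_prod, lintegral_prod]
        exact (hG.indicator hTmeas).aemeasurable
      have inner_eval : ∀ s : ℝ,
          (∫⁻ u, T.indicator (fun p => ENNReal.ofReal (F (n+1) k (e.symm p))) (s, u))
          = (Ioo (0:ℝ) b).indicator
              (fun s => ENNReal.ofReal (s ^ k) * ENNReal.ofReal ((((k:ℝ)+1) ^ (n+1))⁻¹)) s := by
        intro s
        by_cases hsb : s ∈ Ioo (0:ℝ) b
        · have hs0 : (0:ℝ) < s := hsb.1
          rw [indicator_of_mem hsb]
          have h1 : ∀ u, T.indicator (fun p => ENNReal.ofReal (F (n+1) k (e.symm p))) (s, u)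
              = (Δ n s).indicator (fun u => ENNReal.ofReal (F (n+1) k (Fin.snoc u s))) u := by
            intro u
            by_cases hu : u ∈ Δ n s
            · rw [indicator_of_mem ((hTmem s u).mpr ⟨hu, hsb.2⟩), indicator_of_mem hu,
                piFinSuccAbove_symm_snoc]
            · rw [indicator_of_notMem, indicator_of_notMem hu]
              rw [hTmem]; tauto
          simp only [h1]
          rw [lintegral_indicator (measurableSet_Δ n s)]
          have h2 : ∀ u ∈ Δ n s, ENNReal.ofReal (F (n+1) k (Fin.snoc u s))
              = ENNReal.ofReal s⁻¹ * ENNReal.ofReal (F n k u) := by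
            intro u hu
            rw [← ENNReal.ofReal_mul (inv_nonneg.mpr hs0.le)]
            congr 1
            rw [F, F, prod_erase_snoc n u s (fun i => Δ_pos n hu i), snoc_zero']
            have hprod : (0:ℝ) < ∏ i ∈ Finset.univ.erase (0 : Fin (n+1)), u i :=
              Finset.prod_pos fun i _ => Δ_pos n hu i
            field_simp
            try ring
          rw [setLIntegral_congr_fun (measurableSet_Δ n s) h2]
          rw [lintegral_const_mul _ ((measurable_F n k).ennreal_ofReal)]
          rw [IH k s hsb.1]
          rw [← ENNReal.ofReal_mul (inv_nonneg.mpr hs0.le)]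
          rw [← ENNReal.ofReal_mul (pow_nonneg hs0.le k)]
          congr 1
          have hk : (0:ℝ) < (k:ℝ)+1 := by positivity
          field_simp
          ring
        · rw [indicator_of_notMem hsb]
          have hz : ∀ u : Fin (n+1) → ℝ,
              T.indicator (fun p => ENNReal.ofReal (F (n+1) k (e.symm p))) (s, u) = 0 := by
            intro u
            rw [indicator_of_notMem]
            rw [hTmem]
            rintro ⟨hu, hsb'⟩
            rcases lt_or_ge 0 s with h0 | h0
            · exact hsb ⟨h0, hsb'⟩
            · rw [Δ_empty n h0] at hu; exact hu
          simp only [hz, lintegral_zero]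
      rw [step1, step2]
      simp only [inner_eval]
      rw [lintegral_indicator measurableSet_Ioo]
      rw [lintegral_mul_const _ measurable_pow_ofReal]
      rw [lint_pow k hb, ← ENNReal.ofReal_mul (by positivity)]
      congr 1
      have hk : (0:ℝ) < (k:ℝ)+1 := by positivity
      field_simp
      ring

lemma summable_aux (m : ℕ) : Summable (fun k : ℕ => 1 / ((k:ℝ)+1) ^ (m+2)) := by
  have h : Summable (fun k : ℕ => 1 / (k:ℝ) ^ (m+2)) :=
    Real.summable_one_div_nat_pow.mpr (by omega)
  have := h.comp_injective Nat.succ_injective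
  convert this using 2 with k
  case e'_3 => rfl
  simp only [Function.comp, Nat.succ_eq_add_one]
  push_cast
  ring_nf

lemma Φ_eq_tsum (m : ℕ) {t : Fin (m+2) → ℝ} (ht : t ∈ Δ (m+1) 1) :
    ((1 - t 0) * ∏ i ∈ Finset.univ.erase (0 : Fin (m+2)), t i)⁻¹
      = ∑' k : ℕ, F (m+1) k t := by
  have h0 : 0 ≤ t 0 := (ht.2.1).le
  have h1 : t 0 < 1 := lt_of_le_of_lt (ht.1.monotone (Fin.zero_le _)) ht.2.2
  have : ∑' k : ℕ, F (m+1) k t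
      = (∑' k : ℕ, t 0 ^ k) * (∏ i ∈ Finset.univ.erase (0 : Fin (m+2)), t i)⁻¹ :=
    tsum_mul_right
  rw [this, tsum_geometric_of_lt_one h0 h1, mul_inv]

lemma F_summable (m : ℕ) {t : Fin (m+2) → ℝ} (ht : t ∈ Δ (m+1) 1) :
    Summable (fun k => F (m+1) k t) := by
  have h0 : 0 ≤ t 0 := (ht.2.1).le
  have h1 : t 0 < 1 := lt_of_le_of_lt (ht.1.monotone (Fin.zero_le _)) ht.2.2
  exact (summable_geometric_of_lt_one h0 h1).mul_right _

lemma F_nonneg (m : ℕ) (k : ℕ) {t : Fin (m+2) → ℝ} (ht : t ∈ Δ (m+1) 1) :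
    0 ≤ F (m+1) k t := by
  exact mul_nonneg (pow_nonneg (ht.2.1).le k)
    (inv_nonneg.mpr (Finset.prod_pos fun i _ => Δ_pos (m+1) ht i).le)

lemma Φ_pos (m : ℕ) {t : Fin (m+2) → ℝ} (ht : t ∈ Δ (m+1) 1) :
    0 < ((1 - t 0) * ∏ i ∈ Finset.univ.erase (0 : Fin (m+2)), t i)⁻¹ := by
  have h1 : t 0 < 1 := lt_of_le_of_lt (ht.1.monotone (Fin.zero_le _)) ht.2.2
  have h2 : (0:ℝ) < ∏ i ∈ Finset.univ.erase (0 : Fin (m+2)), t i :=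
    Finset.prod_pos fun i _ => Δ_pos (m+1) ht i
  have : (0:ℝ) < 1 - t 0 := by linarith
  positivity

lemma measurable_Φ (m : ℕ) : Measurable (fun t : Fin (m+2) → ℝ =>
    ((1 - t 0) * ∏ i ∈ Finset.univ.erase (0 : Fin (m+2)), t i)⁻¹) := by
  apply Measurable.inv
  exact (measurable_const.sub (measurable_pi_apply 0)).mul
    (Finset.measurable_prod _ fun i _ => measurable_pi_apply i)

lemma lint_Φ (m : ℕ) :
    ∫⁻ t in Δ (m+1) 1, ENNReal.ofReal
        (((1 - t 0) * ∏ i ∈ Finset.univ.erase (0 : Fin (m+2)), t i)⁻¹)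
      = ENNReal.ofReal (∑' k : ℕ, 1 / ((k:ℝ)+1) ^ (m+2)) := by
  have hcongr : ∀ t ∈ Δ (m+1) 1, ENNReal.ofReal
        (((1 - t 0) * ∏ i ∈ Finset.univ.erase (0 : Fin (m+2)), t i)⁻¹)
      = ∑' k : ℕ, ENNReal.ofReal (F (m+1) k t) := by
    intro t ht
    rw [Φ_eq_tsum m ht,
      ENNReal.ofReal_tsum_of_nonneg (fun k => F_nonneg m k ht) (F_summable m ht)]
  rw [setLIntegral_congr_fun (measurableSet_Δ (m+1) 1) hcongr]
  rw [lintegral_tsum (fun k => ((measurable_F (m+1) k).ennreal_ofReal).aemeasurable)]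
  have hkey : ∀ k : ℕ, ∫⁻ t in Δ (m+1) 1, ENNReal.ofReal (F (m+1) k t)
      = ENNReal.ofReal (1 / ((k:ℝ)+1) ^ (m+2)) := by
    intro k
    rw [key (m+1) k 1 one_pos]
    norm_num
  simp only [hkey]
  rw [ENNReal.ofReal_tsum_of_nonneg (fun k => by positivity) (summable_aux m)]

/-- Leibniz's formula: for `n ≥ 2`, the function
`(t_1,…,t_n) ↦ 1/((1−t_1)·t_2⋯t_n)` is Lebesgue integrable on the open simplex
`0 < t_1 < ⋯ < t_n < 1` and its integral there equals `ζ(n) = Σ_{k≥1} k^{−n}`. -/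
theorem statement_0 (n : ℕ) (hn : 2 ≤ n) :
    IntegrableOn
      (fun t : Fin n → ℝ =>
        ((1 - t ⟨0, by omega⟩) * ∏ i ∈ Finset.univ.erase (⟨0, by omega⟩ : Fin n), t i)⁻¹)
      {t : Fin n → ℝ | StrictMono t ∧ 0 < t ⟨0, by omega⟩ ∧ t ⟨n - 1, by omega⟩ < 1}
      volume ∧
    ∫ t in {t : Fin n → ℝ | StrictMono t ∧ 0 < t ⟨0, by omega⟩ ∧ t ⟨n - 1, by omega⟩ < 1},
        ((1 - t ⟨0, by omega⟩) * ∏ i ∈ Finset.univ.erase (⟨0, by omega⟩ : Fin n), t i)⁻¹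
      = ∑' k : ℕ, (1 : ℝ) / ((k : ℝ) + 1) ^ n := by
  obtain ⟨m, rfl⟩ : ∃ m, n = m + 2 := ⟨n - 2, by omega⟩
  have hset : {t : Fin (m+2) → ℝ | StrictMono t ∧ 0 < t ⟨0, by omega⟩ ∧
      t ⟨m + 2 - 1, by omega⟩ < 1} = Δ (m+1) 1 := rfl
  have hfun : (fun t : Fin (m+2) → ℝ =>
      ((1 - t ⟨0, by omega⟩) * ∏ i ∈ Finset.univ.erase (⟨0, by omega⟩ : Fin (m+2)), t i)⁻¹)
      = fun t => ((1 - t 0) * ∏ i ∈ Finset.univ.erase (0 : Fin (m+2)), t i)⁻¹ := rfl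
  rw [hset, hfun]
  set Φ := fun t : Fin (m+2) → ℝ =>
    ((1 - t 0) * ∏ i ∈ Finset.univ.erase (0 : Fin (m+2)), t i)⁻¹ with hΦ
  have hnn : 0 ≤ᵐ[volume.restrict (Δ (m+1) 1)] Φ := by
    filter_upwards [ae_restrict_mem (measurableSet_Δ (m+1) 1)] with t ht
    exact (Φ_pos m ht).le
  have hmeas : AEStronglyMeasurable Φ (volume.restrict (Δ (m+1) 1)) :=
    (measurable_Φ m).aestronglyMeasurable
  have hfin : HasFiniteIntegral Φ (volume.restrict (Δ (m+1) 1)) := by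
    rw [HasFiniteIntegral]
    have : ∀ t ∈ Δ (m+1) 1, ‖Φ t‖ₑ = ENNReal.ofReal (Φ t) := by
      intro t ht
      exact Real.enorm_eq_ofReal (Φ_pos m ht).le
    rw [setLIntegral_congr_fun (measurableSet_Δ (m+1) 1) this, lint_Φ m]
    exact ENNReal.ofReal_lt_top
  have hint : IntegrableOn Φ (Δ (m+1) 1) volume := ⟨hmeas, hfin⟩
  refine ⟨hint, ?_⟩
  rw [integral_eq_lintegral_of_nonneg_ae hnn hmeas]
  rw [lint_Φ m]
  rw [ENNReal.toReal_ofReal]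
  exact tsum_nonneg fun k => by positivity
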